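/- Let 𝔽 be a field and let (V₁, ω₁), (V₂, ω₂), (V₃, ω₃) be finite-dimensional symplectic vector spaces over 𝔽. Equip V₁ × V₂ with the symplectic form ((u,v),(u',v')) ↦ −ω₁(u,u') + ω₂(v,v'), and similarly V₂ × V₃ and V₁ × V₃. If L ⊆ V₁ × V₂ and L' ⊆ V₂ × V₃ are Lagrangian subspaces, then the composite relation L'∘L = {(u, w) ∈ V₁ × V₃ | there exists v ∈ V₂ with (u,v) ∈ L and (v,w) ∈ L'} is a Lagrangian subspace of V₁ × V₃. -/

import Mathlib

section Aux

variable {F : Type*} [Field F] {V₁ V₂ V₃ : Type*}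
    [AddCommGroup V₁] [Module F V₁]
    [AddCommGroup V₂] [Module F V₂]
    [AddCommGroup V₃] [Module F V₃]

/-- skew-symmetry of an alternating bilinear form -/
theorem skew_aux (ω : V₁ →ₗ[F] V₁ →ₗ[F] F) (halt : ∀ v, ω v v = 0) (x y : V₁) :
    ω x y = - ω y x := by
  have h := halt (x + y)
  simp only [map_add, LinearMap.add_apply, halt, zero_add, add_zero] at h
  linear_combination h

/-- The big bilinear form `-ω₁ ⊕ ω₂ ⊕ ω₃` on `V₁ × V₂ × V₃`. -/
def bigForm (ω₁ : V₁ →ₗ[F] V₁ →ₗ[F] F) (ω₂ : V₂ →ₗ[F] V₂ →ₗ[F] F)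
    (ω₃ : V₃ →ₗ[F] V₃ →ₗ[F] F) : LinearMap.BilinForm F (V₁ × V₂ × V₃) :=
  LinearMap.mk₂ F (fun p q => -ω₁ p.1 q.1 + ω₂ p.2.1 q.2.1 + ω₃ p.2.2 q.2.2)
    (by intros; simp only [Prod.fst_add, Prod.snd_add, map_add, LinearMap.add_apply]; ring)
    (by intros; simp only [Prod.smul_fst, Prod.smul_snd, map_smul, LinearMap.smul_apply,
          smul_eq_mul]; ring)
    (by intros; simp only [Prod.fst_add, Prod.snd_add, map_add]; ring)
    (by intros; simp only [Prod.smul_fst, Prod.smul_snd, map_smul, smul_eq_mul]; ring)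

@[simp] theorem bigForm_apply (ω₁ : V₁ →ₗ[F] V₁ →ₗ[F] F) (ω₂ : V₂ →ₗ[F] V₂ →ₗ[F] F)
    (ω₃ : V₃ →ₗ[F] V₃ →ₗ[F] F) (p q : V₁ × V₂ × V₃) :
    bigForm ω₁ ω₂ ω₃ p q = -ω₁ p.1 q.1 + ω₂ p.2.1 q.2.1 + ω₃ p.2.2 q.2.2 := rfl

/-- inclusion `V₁ × V₂ → V₁ × V₂ × V₃`, `(u,v) ↦ (u,v,0)` -/
def inclL : (V₁ × V₂) →ₗ[F] V₁ × V₂ × V₃ where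
  toFun p := (p.1, p.2, 0)
  map_add' := by intros; simp
  map_smul' := by intros; simp

/-- inclusion `V₂ × V₃ → V₁ × V₂ × V₃`, `(v,w) ↦ (0,-v,w)` -/
def inclR : (V₂ × V₃) →ₗ[F] V₁ × V₂ × V₃ where
  toFun p := (0, -p.1, p.2)
  map_add' := by intros; simp; abel
  map_smul' := by intros; simp

end Aux

theorem statement14 {F : Type*} [Field F]
    {V₁ V₂ V₃ : Type*}
    [AddCommGroup V₁] [Module F V₁] [FiniteDimensional F V₁]
    [AddCommGroup V₂] [Module F V₂] [FiniteDimensional F V₂]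
    [AddCommGroup V₃] [Module F V₃] [FiniteDimensional F V₃]
    (ω₁ : V₁ →ₗ[F] V₁ →ₗ[F] F) (h₁alt : ∀ v, ω₁ v v = 0)
    (h₁nd : ∀ u, (∀ v, ω₁ u v = 0) → u = 0)
    (ω₂ : V₂ →ₗ[F] V₂ →ₗ[F] F) (h₂alt : ∀ v, ω₂ v v = 0)
    (h₂nd : ∀ u, (∀ v, ω₂ u v = 0) → u = 0)
    (ω₃ : V₃ →ₗ[F] V₃ →ₗ[F] F) (h₃alt : ∀ v, ω₃ v v = 0)
    (h₃nd : ∀ u, (∀ v, ω₃ u v = 0) → u = 0)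
    (L : Submodule F (V₁ × V₂)) (L' : Submodule F (V₂ × V₃))
    (hL : (L : Set (V₁ × V₂)) =
      {p | ∀ q ∈ L, -ω₁ p.1 q.1 + ω₂ p.2 q.2 = 0})
    (hL' : (L' : Set (V₂ × V₃)) =
      {p | ∀ q ∈ L', -ω₂ p.1 q.1 + ω₃ p.2 q.2 = 0}) :
    {p : V₁ × V₃ | ∃ v : V₂, (p.1, v) ∈ L ∧ (v, p.2) ∈ L'} =
      {p : V₁ × V₃ | ∀ q : V₁ × V₃,
        (∃ v : V₂, (q.1, v) ∈ L ∧ (v, q.2) ∈ L') →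
          -ω₁ p.1 q.1 + ω₃ p.2 q.2 = 0} := by
  classical
  have sk₁ := skew_aux ω₁ h₁alt
  have sk₂ := skew_aux ω₂ h₂alt
  have sk₃ := skew_aux ω₃ h₃alt
  have memL : ∀ p : V₁ × V₂, p ∈ L ↔ ∀ q ∈ L, -ω₁ p.1 q.1 + ω₂ p.2 q.2 = 0 := by
    intro p; exact Set.ext_iff.mp hL p
  have memL' : ∀ p : V₂ × V₃, p ∈ L' ↔ ∀ q ∈ L', -ω₂ p.1 q.1 + ω₃ p.2 q.2 = 0 := by
    intro p; exact Set.ext_iff.mp hL' p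
  set B : LinearMap.BilinForm F (V₁ × V₂ × V₃) := bigForm ω₁ ω₂ ω₃ with hB
  have hrefl : B.IsRefl := by
    intro x y hxy
    have : B y x = - B x y := by
      simp only [hB, bigForm_apply]
      rw [sk₁ y.1 x.1, sk₂ y.2.1 x.2.1, sk₃ y.2.2 x.2.2]; ring
    rw [this, hxy, neg_zero]
  have hnd : B.Nondegenerate := by
    refine (LinearMap.IsRefl.nondegenerate_iff_separatingLeft hrefl).mpr ?_
    intro x hx
    have ha : x.1 = 0 := by
      apply h₁nd; intro v
      have := hx (v, 0, 0)
      simp only [hB, bigForm_apply, map_zero, LinearMap.zero_apply] at this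
      linear_combination -this
    have hb : x.2.1 = 0 := by
      apply h₂nd; intro v
      have := hx (0, v, 0)
      simp only [hB, bigForm_apply, map_zero, LinearMap.zero_apply] at this
      first | linear_combination this | linear_combination -(this)
    have hc : x.2.2 = 0 := by
      apply h₃nd; intro v
      have := hx (0, 0, v)
      simp only [hB, bigForm_apply, map_zero, LinearMap.zero_apply] at this
      first | linear_combination this | linear_combination -(this)
    exact Prod.ext ha (Prod.ext hb hc)
  set M : Submodule F (V₁ × V₂ × V₃) :=
    Submodule.map (inclL (F := F)) L ⊔ Submodule.map (inclR (F := F)) L' with hM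
  have key := B.orthogonal_orthogonal hnd hrefl M
  ext ⟨u, w⟩
  simp only [Set.mem_setOf_eq]
  constructor
  · rintro ⟨v, hv1, hv2⟩ ⟨u', w'⟩ ⟨v', hv1', hv2'⟩
    have e1 := (memL _).mp hv1 (u', v') hv1'
    have e2 := (memL' _).mp hv2 (v', w') hv2'
    simp only at e1 e2 ⊢
    first | linear_combination e1 + e2 | linear_combination -(e1+e2)
  · intro hp
    have hmem : ((u, 0, w) : V₁ × V₂ × V₃) ∈ M := by
      rw [← key]
      rw [LinearMap.BilinForm.mem_orthogonal_iff]
      rintro ⟨a, b, c⟩ hn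
      have habL : (a, b) ∈ L := by
        rw [memL]
        rintro ⟨x₁, x₂⟩ hx
        have h1 := hn ((x₁, x₂, 0) : V₁ × V₂ × V₃)
          (Submodule.mem_sup_left (Submodule.mem_map_of_mem hx))
        simp only [hB, LinearMap.BilinForm.IsOrtho, bigForm_apply, map_zero,
          LinearMap.zero_apply] at h1
        rw [sk₁ x₁ a, sk₂ x₂ b] at h1
        simp only
        first | linear_combination h1 | linear_combination -(h1)
      have hbcL' : (b, c) ∈ L' := by
        rw [memL']
        rintro ⟨y₁, y₂⟩ hy
        have h1 := hn ((0, -y₁, y₂) : V₁ × V₂ × V₃)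
          (Submodule.mem_sup_right (Submodule.mem_map_of_mem hy))
        simp only [hB, LinearMap.BilinForm.IsOrtho, bigForm_apply, map_zero, map_neg,
          LinearMap.neg_apply, LinearMap.zero_apply] at h1
        rw [sk₂ y₁ b, sk₃ y₂ c] at h1
        simp only
        first | linear_combination h1 | linear_combination -(h1)
      have hfin := hp (a, c) ⟨b, habL, hbcL'⟩
      simp only at hfin
      simp only [LinearMap.BilinForm.IsOrtho, hB, bigForm_apply, map_zero]
      rw [sk₁ a u, sk₃ c w]
      first | linear_combination hfin | linear_combination -(hfin)
    rw [hM, Submodule.mem_sup] at hmem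
    obtain ⟨y, ⟨x, hx, rfl⟩, z, ⟨y', hy', rfl⟩, hsum⟩ := hmem
    have h1 : x.1 = u := by
      have := congrArg Prod.fst hsum; simpa [inclL, inclR] using this
    have h2 : x.2 - y'.1 = 0 := by
      have := congrArg (fun p : V₁ × V₂ × V₃ => p.2.1) hsum
      simpa [inclL, inclR, sub_eq_add_neg] using this
    have h3 : y'.2 = w := by
      have := congrArg (fun p : V₁ × V₂ × V₃ => p.2.2) hsum
      simpa [inclL, inclR] using this
    refine ⟨x.2, ?_, ?_⟩
    · have : (u, x.2) = x := by rw [← h1]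
      rw [this]; exact hx
    · have hv : x.2 = y'.1 := by rwa [sub_eq_zero] at h2
      have : (x.2, w) = y' := by rw [hv, ← h3]
      rw [this]; exact hy'
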